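/- There exists a code C ⊆ {0,1}^{10} with |C| = 110 such that d_Z(a,b) ≥ 2 for all distinct a, b ∈ C, i.e., a non-adaptive code of length 10 and size 110 correcting one asymmetric error. -/

import Mathlib

/-- Hamming weight of a binary word: the number of ones. -/
def wt {n : ℕ} (a : Fin n → Bool) : ℕ :=
  (Finset.univ.filter (fun i => a i = true)).card

/-- N(a,b) = number of positions where a is 0 and b is 1. -/
def NN {n : ℕ} (a b : Fin n → Bool) : ℕ :=
  (Finset.univ.filter (fun i => a i = false ∧ b i = true)).card

/-- The Z-distance d_Z(a,b) = max(N(a,b), N(b,a)). -/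
def dZ {n : ℕ} (a b : Fin n → Bool) : ℕ := max (NN a b) (NN b a)

/-- A code correcting one asymmetric error: d_Z(a,b) ≥ 2 for distinct codewords. -/
def IsZCode {n : ℕ} (C : Finset (Fin n → Bool)) : Prop :=
  ∀ a ∈ C, ∀ b ∈ C, a ≠ b → 2 ≤ dZ a b

/-- The output ball B_1(a): words obtainable from a by at most one asymmetric (1→0) error. -/
def ball {n : ℕ} (a : Fin n → Bool) : Finset (Fin n → Bool) :=
  Finset.univ.filter (fun y => (∀ i, y i ≤ a i) ∧ wt a - wt y ≤ 1)

/-- The number of free points of a code: words lying in no ball B_1(a), a ∈ C. -/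
def freeCount {n : ℕ} (C : Finset (Fin n → Bool)) : ℕ :=
  (Finset.univ.filter (fun y => ∀ a ∈ C, y ∉ ball a)).card

/-- A two-stage coding algorithm (c1, c2, dec) of lengths n1, n2 with message set `Fin M`
is successful if it correctly decodes under at most one asymmetric error in total. -/
def TwoStageSuccess (n1 n2 M : ℕ)
    (c1 : Fin M → (Fin n1 → Bool))
    (c2 : Fin M → (Fin n1 → Bool) → (Fin n2 → Bool))
    (dec : (Fin n1 → Bool) → (Fin n2 → Bool) → Fin M) : Prop :=
  ∀ (m : Fin M) (y1 : Fin n1 → Bool) (y2 : Fin n2 → Bool),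
    (∀ i, y1 i ≤ c1 m i) → (∀ i, y2 i ≤ c2 m y1 i) →
    (wt (c1 m) - wt y1) + (wt (c2 m y1) - wt y2) ≤ 1 →
    dec y1 y2 = m

/-- Interpret a natural number as a length-10 binary word via its bits. -/
def word10 (m : ℕ) : Fin 10 → Bool := fun i => m.testBit i.val

/-- The explicit list of 110 codewords (as bitmasks). -/
def codeList : List ℕ :=
  [0, 9, 18, 31, 38, 43, 74, 85, 96, 109, 115, 120, 126, 131, 132, 153, 172, 175, 178, 181, 198, 203, 208, 215, 220, 225, 249, 269, 280, 295, 305, 315, 316, 321, 335, 342, 345, 356, 362, 373, 398, 403, 404, 416, 425, 438, 453, 456, 474, 477, 483, 492, 495, 496, 531, 540, 549, 558, 560, 567, 569, 580, 583, 585, 602, 605, 610, 628, 635, 648, 653, 662, 671, 675, 698, 721, 742, 744, 749, 766, 768, 774, 779, 789, 798, 808, 813, 818, 831, 844, 848, 851, 865, 871, 888, 897, 903, 920, 932, 939, 945, 956, 962, 969, 974, 980, 987, 1010, 1013, 1023]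

set_option maxRecDepth 10000 in
set_option maxHeartbeats 4000000 in
theorem codeList_pairwise :
    (codeList.map word10).Pairwise (fun a b => 2 ≤ dZ a b) := by decide

set_option maxRecDepth 10000 in
set_option maxHeartbeats 4000000 in
theorem codeList_nodup : (codeList.map word10).Nodup := by decide

theorem dZ_symm {n : ℕ} (a b : Fin n → Bool) : dZ a b = dZ b a := by
  simp [dZ, max_comm]

theorem exists_code_length_10_size_110 :
    ∃ C : Finset (Fin 10 → Bool), C.card = 110 ∧ IsZCode C := by
  refine ⟨(codeList.map word10).toFinset, ?_, ?_⟩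
  · rw [List.toFinset_card_of_nodup codeList_nodup]
    rfl
  · intro a ha b hb hab
    rw [List.mem_toFinset] at ha hb
    haveI : Std.Symm (fun a b : Fin 10 → Bool => 2 ≤ dZ a b) := ⟨fun x y h => (dZ_symm x y) ▸ h⟩
    exact codeList_pairwise.forall ha hb hab
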